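/- Let m ≥ 2 and let i_1, i_2, i_3 be integers with 1 ≤ i_1 < i_2 < i_3 < 2m such that i_2 − i_1 < m, i_3 − i_2 < m, and i_1 + 2m − i_3 < m. Then there exists an SPM M of CK(2m) whose set of boundary edges is exactly {{i_1−1, i_1}, {i_2−1, i_2}, {i_3−1, i_3}}. -/

import Mathlib

def inArc (n : ℕ) (a b z : ZMod n) : Prop :=
  0 < (z - a).val ∧ (z - a).val < (b - a).val

def Cross (n : ℕ) (e f : Sym2 (ZMod n)) : Prop :=
  ∃ a b c d : ZMod n, e = s(a, b) ∧ f = s(c, d) ∧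
    a ≠ b ∧ a ≠ c ∧ a ≠ d ∧ b ≠ c ∧ b ≠ d ∧ c ≠ d ∧
    Xor' (inArc n a b c) (inArc n a b d)

def IsSPM (m : ℕ) (M : Finset (Sym2 (ZMod (2 * m)))) : Prop :=
  M.card = m ∧
  (∀ e ∈ M, ¬ e.IsDiag) ∧
  (∀ v : ZMod (2 * m), ∃! e, e ∈ M ∧ v ∈ e) ∧
  (∀ e ∈ M, ∀ f ∈ M, ¬ Cross (2 * m) e f)

def IsBlockingSet (m : ℕ) (B : Set (Sym2 (ZMod (2 * m)))) : Prop :=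
  (∀ e ∈ B, ¬ e.IsDiag) ∧
  ∀ M : Finset (Sym2 (ZMod (2 * m))), IsSPM m M → ∃ e ∈ M, e ∈ B

def IsBlocker (m : ℕ) (B : Finset (Sym2 (ZMod (2 * m)))) : Prop :=
  IsBlockingSet m (B : Set (Sym2 (ZMod (2 * m)))) ∧ B.card = m

def IsBoundaryEdge (m : ℕ) (e : Sym2 (ZMod (2 * m))) : Prop :=
  ∃ i : ZMod (2 * m), e = s(i, i + 1)

def edgeOrder {n : ℕ} (e : Sym2 (ZMod n)) : ℕ :=
  Sym2.lift ⟨fun i j => min (i - j).val (j - i).val, fun i j => min_comm _ _⟩ e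

def edgeSum {n : ℕ} (e : Sym2 (ZMod n)) : ZMod n :=
  Sym2.lift ⟨fun i j => i + j, fun i j => add_comm i j⟩ e

namespace TriSPMaux

def P (n : ℕ) (base : ℤ) (u : ℕ) : ZMod n := ((base + u : ℤ) : ZMod n)

lemma cast_zero_small (n : ℕ) {x : ℤ} (h1 : 0 ≤ x) (h2 : x < n)
    (h : (x : ZMod n) = 0) : x = 0 := by
  have : (x : ZMod n) = ((0 : ℤ) : ZMod n) := by simpa using h
  rw [ZMod.intCast_eq_intCast_iff'] at this
  rwa [Int.emod_eq_of_lt h1 h2, Int.zero_emod] at this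

lemma P_sub (n : ℕ) (base : ℤ) (u v : ℕ) :
    P n base u - P n base v = (((u : ℤ) - v : ℤ) : ZMod n) := by
  unfold P; push_cast; ring

lemma P_inj (n : ℕ) (base : ℤ) {u v : ℕ} (hu : u < n) (hv : v < n)
    (h : P n base u = P n base v) : u = v := by
  have h' : (((u : ℤ) - v : ℤ) : ZMod n) = 0 := by rw [← P_sub n base u v, h]; simp
  rcases le_or_gt (v : ℤ) u with hle | hlt
  · have := cast_zero_small n (by omega) (by omega : (u:ℤ) - v < n) h'
    omega
  · have h'' : ((((v : ℤ) - u) : ℤ) : ZMod n) = 0 := by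
      have : (((v : ℤ) - u : ℤ) : ZMod n) = -((((u : ℤ) - v : ℤ)) : ZMod n) := by
        push_cast; ring
      rw [this, h', neg_zero]
    have := cast_zero_small n (by omega) (by omega : (v:ℤ) - u < n) h''
    omega

lemma val_cast_small (n : ℕ) (hn : 0 < n) {x : ℤ} (h1 : 0 ≤ x) (h2 : x < n) :
    ((x : ZMod n)).val = x.toNat := by
  haveI : NeZero n := ⟨hn.ne'⟩
  have := ZMod.val_intCast (n := n) x
  rw [Int.emod_eq_of_lt h1 h2] at this
  omega

lemma inArc_P (n : ℕ) (hn : 0 < n) (base : ℤ) (u v z : ℕ)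
    (hu : u < n) (hv : v < n) (hz : z < n) :
    inArc n (P n base u) (P n base v) (P n base z) ↔
      (u < v ∧ u < z ∧ z < v) ∨ (v < u ∧ (u < z ∨ z < v)) := by
  unfold inArc
  rw [P_sub n base z u, P_sub n base v u]
  have key : ∀ w : ℕ, w < n → (((w : ℤ) - u : ℤ) : ZMod n).val =
      (if u ≤ w then ((w : ℤ) - u).toNat else ((w : ℤ) - u + n).toNat) := by
    intro w hw
    split_ifs with h
    · exact val_cast_small n hn (by omega) (by omega)
    · have : (((w : ℤ) - u : ℤ) : ZMod n) = (((w : ℤ) - u + n : ℤ) : ZMod n) := by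
        push_cast
        rw [ZMod.natCast_self]
        ring
      rw [this]
      exact val_cast_small n hn (by omega) (by omega)
  rw [key z hz, key v hv]
  split_ifs <;> omega

lemma noncross_P (n : ℕ) (hn : 0 < n) (base : ℤ) {u₁ v₁ u₂ v₂ : ℕ}
    (h1 : u₁ < v₁) (h2 : u₂ < v₂) (h3 : v₁ < n) (h4 : v₂ < n)
    (hcfg : v₁ < u₂ ∨ v₂ < u₁ ∨ (u₁ < u₂ ∧ v₂ < v₁) ∨ (u₂ < u₁ ∧ v₁ < v₂) ∨
      (u₁ = u₂ ∧ v₁ = v₂)) :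
    ¬ Cross n s(P n base u₁, P n base v₁) s(P n base u₂, P n base v₂) := by
  rintro ⟨a, b, c, d, he, hf, -, -, -, -, -, -, hxor⟩
  rw [Sym2.eq_iff] at he hf
  have hu₁ : u₁ < n := by omega
  have hu₂ : u₂ < n := by omega
  unfold Xor' Xor at hxor
  rcases he with ⟨ha, hb⟩ | ⟨ha, hb⟩ <;> rcases hf with ⟨hc, hd⟩ | ⟨hc, hd⟩ <;>
      subst ha hb hc hd <;>
    [ rw [inArc_P n hn base u₁ v₁ u₂ hu₁ h3 hu₂, inArc_P n hn base u₁ v₁ v₂ hu₁ h3 h4] at hxor;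
      rw [inArc_P n hn base u₁ v₁ v₂ hu₁ h3 h4, inArc_P n hn base u₁ v₁ u₂ hu₁ h3 hu₂] at hxor;
      rw [inArc_P n hn base v₁ u₁ u₂ h3 hu₁ hu₂, inArc_P n hn base v₁ u₁ v₂ h3 hu₁ h4] at hxor;
      rw [inArc_P n hn base v₁ u₁ v₂ h3 hu₁ h4, inArc_P n hn base v₁ u₁ u₂ h3 hu₁ hu₂] at hxor] <;>
    omega

def U (K1 K2 K3 t : ℕ) : ℕ :=
  if t < K1 then K1 - 1 - t
  else if t < K1 + K2 then 2*K1 + K2 - 1 - (t - K1)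
  else 2*K1 + 2*K2 + K3 - 1 - (t - K1 - K2)

def V (K1 K2 K3 t : ℕ) : ℕ :=
  if t < K1 then K1 + t
  else if t < K1 + K2 then 2*K1 + K2 + (t - K1)
  else 2*K1 + 2*K2 + K3 + (t - K1 - K2)

def T (K1 K2 K3 z : ℕ) : ℕ :=
  if z < 2*K1 then (if z < K1 then K1 - 1 - z else z - K1)
  else if z < 2*K1 + 2*K2 then K1 + (if z < 2*K1 + K2 then 2*K1 + K2 - 1 - z else z - (2*K1 + K2))
  else K1 + K2 + (if z < 2*K1 + 2*K2 + K3 then 2*K1 + 2*K2 + K3 - 1 - z else z - (2*K1 + 2*K2 + K3))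

variable {K1 K2 K3 : ℕ}

lemma UV_lt (hK1 : 0 < K1) (hK2 : 0 < K2) (hK3 : 0 < K3) {t : ℕ} (ht : t < K1 + K2 + K3) :
    U K1 K2 K3 t < V K1 K2 K3 t ∧ V K1 K2 K3 t < 2*(K1 + K2 + K3) ∧
      V K1 K2 K3 t + 2 < U K1 K2 K3 t + 2*(K1 + K2 + K3) := by
  unfold U V; split_ifs <;> omega

lemma T_spec (hK1 : 0 < K1) (hK2 : 0 < K2) (hK3 : 0 < K3) {z : ℕ}
    (hz : z < 2*(K1 + K2 + K3)) :
    T K1 K2 K3 z < K1 + K2 + K3 ∧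
      (U K1 K2 K3 (T K1 K2 K3 z) = z ∨ V K1 K2 K3 (T K1 K2 K3 z) = z) := by
  unfold U V T; split_ifs <;> omega

lemma T_U (hK1 : 0 < K1) (hK2 : 0 < K2) (hK3 : 0 < K3) {t : ℕ} (ht : t < K1 + K2 + K3) :
    T K1 K2 K3 (U K1 K2 K3 t) = t := by
  unfold U T; split_ifs <;> omega

lemma T_V (hK1 : 0 < K1) (hK2 : 0 < K2) (hK3 : 0 < K3) {t : ℕ} (ht : t < K1 + K2 + K3) :
    T K1 K2 K3 (V K1 K2 K3 t) = t := by
  unfold V T; split_ifs <;> omega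

lemma cfg (hK1 : 0 < K1) (hK2 : 0 < K2) (hK3 : 0 < K3) {t t' : ℕ}
    (ht : t < K1 + K2 + K3) (ht' : t' < K1 + K2 + K3) :
    V K1 K2 K3 t < U K1 K2 K3 t' ∨ V K1 K2 K3 t' < U K1 K2 K3 t ∨
    (U K1 K2 K3 t < U K1 K2 K3 t' ∧ V K1 K2 K3 t' < V K1 K2 K3 t) ∨
    (U K1 K2 K3 t' < U K1 K2 K3 t ∧ V K1 K2 K3 t < V K1 K2 K3 t') ∨
    (U K1 K2 K3 t = U K1 K2 K3 t' ∧ V K1 K2 K3 t = V K1 K2 K3 t') := by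
  unfold U V; split_ifs <;> omega

lemma bdry_t (hK1 : 0 < K1) (hK2 : 0 < K2) (hK3 : 0 < K3) {t : ℕ} (ht : t < K1 + K2 + K3) :
    V K1 K2 K3 t = U K1 K2 K3 t + 1 ↔ (t = 0 ∨ t = K1 ∨ t = K1 + K2) := by
  unfold U V; split_ifs <;> omega

end TriSPMaux

open TriSPMaux in
theorem triangular_SPM_exists (m : ℕ) (hm : 2 ≤ m) (i₁ i₂ i₃ : ℕ)
    (h1 : 1 ≤ i₁) (h12 : i₁ < i₂) (h23 : i₂ < i₃) (h3 : i₃ < 2 * m)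
    (d1 : i₂ - i₁ < m) (d2 : i₃ - i₂ < m) (d3 : i₁ + 2 * m - i₃ < m) :
    ∃ M : Finset (Sym2 (ZMod (2 * m))), IsSPM m M ∧
      {e : Sym2 (ZMod (2 * m)) | e ∈ M ∧ IsBoundaryEdge m e} =
        {s((i₁ : ZMod (2 * m)) - 1, (i₁ : ZMod (2 * m))),
         s((i₂ : ZMod (2 * m)) - 1, (i₂ : ZMod (2 * m))),
         s((i₃ : ZMod (2 * m)) - 1, (i₃ : ZMod (2 * m)))} := by
  have hn : 0 < 2 * m := by omega
  set K1 : ℕ := m - (i₃ - i₂) with hK1def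
  set K2 : ℕ := m - (i₁ + 2 * m - i₃) with hK2def
  set K3 : ℕ := m - (i₂ - i₁) with hK3def
  have hK1 : 0 < K1 := by omega
  have hK2 : 0 < K2 := by omega
  have hK3 : 0 < K3 := by omega
  have hsum : K1 + K2 + K3 = m := by omega
  set base : ℤ := (i₁ : ℤ) - K1 with hbase
  set E : ℕ → Sym2 (ZMod (2 * m)) :=
    fun t => s(P (2*m) base (U K1 K2 K3 t), P (2*m) base (V K1 K2 K3 t)) with hE
  have hUVb : ∀ t < m, U K1 K2 K3 t < V K1 K2 K3 t ∧ V K1 K2 K3 t < 2*m ∧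
      V K1 K2 K3 t + 2 < U K1 K2 K3 t + 2*m := by
    intro t ht
    have := UV_lt hK1 hK2 hK3 (t := t) (by omega)
    omega
  -- injectivity of t ↦ E t on range m
  have hInj : ∀ t < m, ∀ t' < m, E t = E t' → t = t' := by
    intro t ht t' ht' h
    have b1 := hUVb t ht
    have b2 := hUVb t' ht'
    rw [hE] at h
    simp only [Sym2.eq_iff] at h
    rcases h with ⟨hu, hv⟩ | ⟨hu, hv⟩
    · have h1' := P_inj (2*m) base (by omega) (by omega) hu
      have := T_U hK1 hK2 hK3 (t := t) (by omega)
      have := T_U hK1 hK2 hK3 (t := t') (by omega)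
      rw [h1'] at *
      omega
    · have h1' := P_inj (2*m) base (by omega) (by omega) hu
      have h2' := P_inj (2*m) base (by omega) (by omega) hv
      omega
  have hPeq : ∀ (w : ℕ) (x : ℤ), base + w = x → P (2*m) base w = (x : ZMod (2*m)) := by
    intro w x h; unfold P; rw [h]
  -- the three special edges
  have hU0 : U K1 K2 K3 0 = K1 - 1 := by unfold U; split_ifs <;> omega
  have hV0 : V K1 K2 K3 0 = K1 := by unfold V; split_ifs <;> omega
  have hU1 : U K1 K2 K3 K1 = 2*K1 + K2 - 1 := by unfold U; split_ifs <;> omega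
  have hV1 : V K1 K2 K3 K1 = 2*K1 + K2 := by unfold V; split_ifs <;> omega
  have hU2 : U K1 K2 K3 (K1 + K2) = 2*K1 + 2*K2 + K3 - 1 := by unfold U; split_ifs <;> omega
  have hV2 : V K1 K2 K3 (K1 + K2) = 2*K1 + 2*K2 + K3 := by unfold V; split_ifs <;> omega
  have hcast : ∀ j : ℕ, (((j : ℤ) - 1 : ℤ) : ZMod (2*m)) = (j : ZMod (2*m)) - 1 := by
    intro j; push_cast; ring
  have e1 : E 0 = s((i₁ : ZMod (2*m)) - 1, (i₁ : ZMod (2*m))) := by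
    rw [hE]
    simp only
    rw [hU0, hV0, hPeq (K1 - 1) ((i₁ : ℤ) - 1) (by omega),
      hPeq K1 (i₁ : ℤ) (by omega), hcast]
    norm_cast
  have e2 : E K1 = s((i₂ : ZMod (2*m)) - 1, (i₂ : ZMod (2*m))) := by
    rw [hE]
    simp only
    rw [hU1, hV1, hPeq (2*K1 + K2 - 1) ((i₂ : ℤ) - 1) (by omega),
      hPeq (2*K1 + K2) (i₂ : ℤ) (by omega), hcast]
    norm_cast
  have e3 : E (K1 + K2) = s((i₃ : ZMod (2*m)) - 1, (i₃ : ZMod (2*m))) := by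
    rw [hE]
    simp only
    rw [hU2, hV2, hPeq (2*K1 + 2*K2 + K3 - 1) ((i₃ : ℤ) - 1) (by omega),
      hPeq (2*K1 + 2*K2 + K3) (i₃ : ℤ) (by omega), hcast]
    norm_cast
  refine ⟨(Finset.range m).image E, ⟨?_, ?_, ?_, ?_⟩, ?_⟩
  · -- card
    rw [Finset.card_image_of_injOn, Finset.card_range]
    intro t ht t' ht' h
    simp only [Finset.coe_range, Set.mem_Iio] at ht ht'
    exact hInj t ht t' ht' h
  · -- no diagonal
    intro e he
    obtain ⟨t, ht, rfl⟩ := Finset.mem_image.1 he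
    rw [Finset.mem_range] at ht
    rw [hE]
    simp only [Sym2.mk_isDiag_iff]
    intro h
    have b1 := hUVb t ht
    have := P_inj (2*m) base (by omega) (by omega) h
    omega
  · -- perfect matching
    intro v
    set z : ℕ := (v - ((base : ℤ) : ZMod (2*m))).val with hzdef
    haveI : NeZero (2*m) := ⟨by omega⟩
    have hz : z < 2*m := ZMod.val_lt _
    have hPz : P (2*m) base z = v := by
      unfold P
      push_cast
      rw [hzdef, ZMod.natCast_val, ZMod.cast_id]
      ring
    have hTs := T_spec hK1 hK2 hK3 (z := z) (by omega)
    refine ⟨E (T K1 K2 K3 z), ⟨Finset.mem_image_of_mem E (Finset.mem_range.2 (by omega)), ?_⟩, ?_⟩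
    · rw [hE]
      simp only [Sym2.mem_iff]
      rcases hTs.2 with h | h
      · left; rw [← hPz, h]
      · right; rw [← hPz, h]
    · rintro e' ⟨he', hve⟩
      obtain ⟨t', ht', rfl⟩ := Finset.mem_image.1 he'
      rw [Finset.mem_range] at ht'
      have b1 := hUVb t' ht'
      rw [hE] at hve ⊢
      simp only [Sym2.mem_iff] at hve
      have ht'' : t' = T K1 K2 K3 z := by
        rcases hve with h | h
        · have : z = U K1 K2 K3 t' := P_inj (2*m) base (by omega) (by omega) (by rw [hPz, h])
          rw [this, T_U hK1 hK2 hK3 (by omega)]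
        · have : z = V K1 K2 K3 t' := P_inj (2*m) base (by omega) (by omega) (by rw [hPz, h])
          rw [this, T_V hK1 hK2 hK3 (by omega)]
      rw [ht'']
  · -- non-crossing
    intro e he f hf
    obtain ⟨t, ht, rfl⟩ := Finset.mem_image.1 he
    obtain ⟨t', ht', rfl⟩ := Finset.mem_image.1 hf
    rw [Finset.mem_range] at ht ht'
    have b1 := hUVb t ht
    have b2 := hUVb t' ht'
    rw [hE]
    exact noncross_P (2*m) hn base (by omega) (by omega) (by omega) (by omega)
      (cfg hK1 hK2 hK3 (by omega) (by omega))
  · -- boundary edge set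
    ext e
    simp only [Set.mem_setOf_eq, Set.mem_insert_iff, Set.mem_singleton_iff]
    constructor
    · rintro ⟨he, i, hei⟩
      obtain ⟨t, ht, rfl⟩ := Finset.mem_image.1 he
      rw [Finset.mem_range] at ht
      have b1 := hUVb t ht
      have hv : V K1 K2 K3 t = U K1 K2 K3 t + 1 := by
        rw [hE] at hei
        simp only [Sym2.eq_iff] at hei
        rcases hei with ⟨hA, hB⟩ | ⟨hA, hB⟩
        · -- P V = P U + 1
          have hPP : P (2*m) base (V K1 K2 K3 t) - P (2*m) base (U K1 K2 K3 t) = 1 := by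
            rw [hA, hB]; ring
          rw [P_sub] at hPP
          have h0 : ((((V K1 K2 K3 t : ℤ) - U K1 K2 K3 t - 1) : ℤ) : ZMod (2*m)) = 0 := by
            push_cast
            push_cast at hPP
            rw [sub_eq_zero]
            exact hPP
          have := cast_zero_small (2*m) (x := (V K1 K2 K3 t : ℤ) - U K1 K2 K3 t - 1)
            (by omega) (by omega) h0
          omega
        · -- P U = P V + 1
          have hPP : P (2*m) base (U K1 K2 K3 t) - P (2*m) base (V K1 K2 K3 t) = 1 := by
            rw [hA, hB]; ring
          rw [P_sub] at hPP
          have hz2 : (2 * (m : ZMod (2*m))) = 0 := by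
            have := ZMod.natCast_self (2*m)
            push_cast at this
            exact this
          have h0 : ((((U K1 K2 K3 t : ℤ) - V K1 K2 K3 t - 1 + 2*m) : ℤ) : ZMod (2*m)) = 0 := by
            push_cast
            push_cast at hPP
            rw [hPP, hz2]
            ring
          have := cast_zero_small (2*m) (x := (U K1 K2 K3 t : ℤ) - V K1 K2 K3 t - 1 + 2*m)
            (by omega) (by omega) h0
          omega
      have := (bdry_t hK1 hK2 hK3 (by omega)).1 hv
      rcases this with rfl | rfl | rfl
      · left; rw [e1]
      · right; left; rw [e2]
      · right; right; rw [e3]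
    · have hbd : ∀ j : ℕ, IsBoundaryEdge m s((j : ZMod (2*m)) - 1, (j : ZMod (2*m))) := by
        intro j
        refine ⟨(j : ZMod (2*m)) - 1, ?_⟩
        have : ((j : ZMod (2*m)) - 1) + 1 = (j : ZMod (2*m)) := by ring
        rw [this]
      rintro (rfl | rfl | rfl)
      · exact ⟨e1 ▸ Finset.mem_image_of_mem E (Finset.mem_range.2 (by omega)), hbd i₁⟩
      · exact ⟨e2 ▸ Finset.mem_image_of_mem E (Finset.mem_range.2 (by omega)), hbd i₂⟩
      · exact ⟨e3 ▸ Finset.mem_image_of_mem E (Finset.mem_range.2 (by omega)), hbd i₃⟩
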